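/- Small set closure: for any g : ℕ → ℕ and B ⊆ ℕ^{<ℕ}, let C = {τ ∈ ℕ^{<ℕ} : B is g-big above τ} be the g-closure of B. If B is g-small above a string σ, then C is also g-small above σ; moreover C is g-closed, i.e. whenever C is g-big above a string ρ, then ρ ∈ C. -/

import Mathlib

open Classical Filter

noncomputable section


/-- `T` is a finite tree `h`-bushy above `σ`: every element is increasing and
comparable with `σ`, and every non-leaf extending `σ` has at least `h(|τ|)`
immediate children. -/
def IsBushy (h : ℕ → ℕ) (σ : List ℕ) (T : Finset (List ℕ)) : Prop :=
  (∀ τ ∈ T, List.Pairwise (· < ·) τ ∧ (σ <+: τ ∨ τ <+: σ)) ∧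
  ∀ τ ∈ T, σ <+: τ → (∃ x : ℕ, τ ++ [x] ∈ T) →
    h τ.length ≤ {x : ℕ | τ ++ [x] ∈ T}.ncard

/-- `B` is `h`-big above `σ`: some finite tree `h`-bushy above `σ` has all its
leaves in `B`. -/
def BigAbove (h : ℕ → ℕ) (σ : List ℕ) (B : Set (List ℕ)) : Prop :=
  ∃ T : Finset (List ℕ), σ ∈ T ∧ IsBushy h σ T ∧
    ∀ τ ∈ T, (∀ x : ℕ, τ ++ [x] ∉ T) → τ ∈ B

/-- `B` is `h`-small above `σ`. -/
def SmallAbove (h : ℕ → ℕ) (σ : List ℕ) (B : Set (List ℕ)) : Prop :=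
  ¬ BigAbove h σ B

lemma aux_children_finite (π : List ℕ) (T : Finset (List ℕ)) :
    {x : ℕ | π ++ [x] ∈ T}.Finite := by
  have : {x : ℕ | π ++ [x] ∈ T} = (fun x : ℕ => π ++ [x]) ⁻¹' (↑T : Set (List ℕ)) := rfl
  rw [this]
  exact T.finite_toSet.preimage (fun a b h => by simpa using h)

/-- A witness of bigness can be taken to consist only of extensions of `ρ`. -/
lemma aux_restrict (g : ℕ → ℕ) (ρ : List ℕ) (D : Set (List ℕ)) (h : BigAbove g ρ D) :
    ∃ T : Finset (List ℕ), ρ ∈ T ∧ IsBushy g ρ T ∧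
      (∀ τ ∈ T, (∀ x : ℕ, τ ++ [x] ∉ T) → τ ∈ D) ∧ ∀ τ ∈ T, ρ <+: τ := by
  obtain ⟨T, hρ, ⟨hb1, hb2⟩, hleaf⟩ := h
  refine ⟨T.filter (fun π => ρ <+: π), ?_, ⟨?_, ?_⟩, ?_, ?_⟩
  · simp [Finset.mem_filter, hρ]
  · intro τ hτ
    rw [Finset.mem_filter] at hτ
    exact hb1 τ hτ.1
  · intro τ hτ hpre hex
    rw [Finset.mem_filter] at hτ
    have hset : {x : ℕ | τ ++ [x] ∈ T.filter (fun π => ρ <+: π)} = {x : ℕ | τ ++ [x] ∈ T} := by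
      ext x
      simp only [Set.mem_setOf_eq, Finset.mem_filter]
      exact ⟨fun h => h.1, fun h => ⟨h, hpre.trans (by exact ⟨[x], rfl⟩)⟩⟩
    rw [hset]
    obtain ⟨x, hx⟩ := hex
    rw [Finset.mem_filter] at hx
    exact hb2 τ hτ.1 hpre ⟨x, hx.1⟩
  · intro τ hτ hnl
    rw [Finset.mem_filter] at hτ
    refine hleaf τ hτ.1 fun x hx => hnl x ?_
    rw [Finset.mem_filter]
    exact ⟨hx, hτ.2.trans ⟨[x], rfl⟩⟩
  · intro τ hτ
    rw [Finset.mem_filter] at hτ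
    exact hτ.2

/-- Gluing: if the `g`-closure of `B` is big above `ρ` (witnessed by a tree of
cardinality `≤ n`), then `B` is big above `ρ`. -/
lemma aux_main (g : ℕ → ℕ) (B : Set (List ℕ)) :
    ∀ n : ℕ, ∀ T : Finset (List ℕ), T.card ≤ n → ∀ ρ : List ℕ, ρ ∈ T → IsBushy g ρ T →
      (∀ τ ∈ T, (∀ x : ℕ, τ ++ [x] ∉ T) → BigAbove g τ B) → BigAbove g ρ B := by
  intro n
  induction n with
  | zero =>
    intro T hcard ρ hρ _ _
    exact absurd (Finset.card_pos.mpr ⟨ρ, hρ⟩) (by omega)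
  | succ n ih =>
    intro T hcard ρ hρ hbushy hleaf
    by_cases hnl : ∀ x : ℕ, ρ ++ [x] ∉ T
    · exact hleaf ρ hρ hnl
    push_neg at hnl
    obtain ⟨x0, hx0⟩ := hnl
    -- the set of children of ρ in T
    have hXfin : {x : ℕ | ρ ++ [x] ∈ T}.Finite := aux_children_finite ρ T
    -- for each child, B is big above it, with a restricted witness
    have hS : ∀ x : ℕ, ∃ S : Finset (List ℕ), ρ ++ [x] ∈ T →
        (ρ ++ [x] ∈ S ∧ IsBushy g (ρ ++ [x]) S ∧
          (∀ τ ∈ S, (∀ y : ℕ, τ ++ [y] ∉ S) → τ ∈ B) ∧ ∀ τ ∈ S, ρ ++ [x] <+: τ) := by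
      intro x
      by_cases hx : ρ ++ [x] ∈ T
      · -- the restricted subtree above ρ ++ [x]
        have hbig : BigAbove g (ρ ++ [x]) B := by
          apply ih (T.filter (fun π => ρ ++ [x] <+: π))
          · -- cardinality bound
            have hsub : T.filter (fun π => ρ ++ [x] <+: π) ⊆ T.erase ρ := by
              intro π hπ
              rw [Finset.mem_filter] at hπ
              rw [Finset.mem_erase]
              refine ⟨?_, hπ.1⟩
              intro hcontra
              have := hπ.2.length_le
              simp [hcontra] at this
            have := Finset.card_le_card hsub
            rw [Finset.card_erase_of_mem hρ] at this
            omega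
          · rw [Finset.mem_filter]; exact ⟨hx, List.prefix_refl _⟩
          · constructor
            · intro τ hτ
              rw [Finset.mem_filter] at hτ
              exact ⟨(hbushy.1 τ hτ.1).1, Or.inl hτ.2⟩
            · intro τ hτ hpre hex
              rw [Finset.mem_filter] at hτ
              have hset : {y : ℕ | τ ++ [y] ∈ T.filter (fun π => ρ ++ [x] <+: π)}
                  = {y : ℕ | τ ++ [y] ∈ T} := by
                ext y
                simp only [Set.mem_setOf_eq, Finset.mem_filter]
                exact ⟨fun h => h.1, fun h => ⟨h, hτ.2.trans ⟨[y], rfl⟩⟩⟩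
              rw [hset]
              obtain ⟨y, hy⟩ := hex
              rw [Finset.mem_filter] at hy
              refine hbushy.2 τ hτ.1 ?_ ⟨y, hy.1⟩
              exact (List.prefix_append ρ [x]).trans hτ.2
          · intro τ hτ hnl'
            rw [Finset.mem_filter] at hτ
            refine hleaf τ hτ.1 fun y hy => hnl' y ?_
            rw [Finset.mem_filter]
            exact ⟨hy, hτ.2.trans ⟨[y], rfl⟩⟩
        obtain ⟨S, h1, h2, h3, h4⟩ := aux_restrict g (ρ ++ [x]) B hbig
        exact ⟨S, fun _ => ⟨h1, h2, h3, h4⟩⟩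
      · exact ⟨∅, fun h => absurd h hx⟩
    choose S hSspec using hS
    -- the glued tree
    set U : Finset (List ℕ) := insert ρ (hXfin.toFinset.biUnion S) with hU
    have hmemU : ∀ τ : List ℕ, τ ∈ U ↔ τ = ρ ∨ ∃ x : ℕ, ρ ++ [x] ∈ T ∧ τ ∈ S x := by
      intro τ
      simp only [hU, Finset.mem_insert, Finset.mem_biUnion, Set.Finite.mem_toFinset,
        Set.mem_setOf_eq]
    -- elements of S x properly extend ρ
    have hSx_ext : ∀ x : ℕ, ρ ++ [x] ∈ T → ∀ τ ∈ S x, ρ ++ [x] <+: τ := by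
      intro x hx τ hτ
      exact (hSspec x hx).2.2.2 τ hτ
    have hSx_ne : ∀ x : ℕ, ρ ++ [x] ∈ T → ∀ τ ∈ S x, τ ≠ ρ := by
      intro x hx τ hτ hcontra
      have := (hSx_ext x hx τ hτ).length_le
      simp [hcontra] at this
    refine ⟨U, ?_, ⟨?_, ?_⟩, ?_⟩
    · rw [hmemU]; exact Or.inl rfl
    · -- sorted and comparable
      intro τ hτ
      rw [hmemU] at hτ
      rcases hτ with rfl | ⟨x, hx, hτ⟩
      · exact ⟨(hbushy.1 τ hρ).1, Or.inl (List.prefix_refl _)⟩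
      · refine ⟨((hSspec x hx).2.1).1 τ hτ |>.1, Or.inl ?_⟩
        exact (List.prefix_append ρ [x]).trans (hSx_ext x hx τ hτ)
    · -- bushiness
      intro π hπ hpre hex
      rw [hmemU] at hπ
      rcases hπ with rfl | ⟨x, hx, hπ⟩
      · -- π = ρ: children include all of {x | π ++ [x] ∈ T}
        have hsub : {x : ℕ | π ++ [x] ∈ T} ⊆ {x : ℕ | π ++ [x] ∈ U} := by
          intro x hx
          rw [Set.mem_setOf_eq, hmemU]
          exact Or.inr ⟨x, hx, (hSspec x hx).1⟩
        have hge := hbushy.2 π hρ (List.prefix_refl _) ⟨x0, hx0⟩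
        exact hge.trans (Set.ncard_le_ncard hsub (aux_children_finite π U))
      · -- π ∈ S x: its children in U are exactly its children in S x
        have hπext : ρ ++ [x] <+: π := hSx_ext x hx π hπ
        have hset : {y : ℕ | π ++ [y] ∈ U} = {y : ℕ | π ++ [y] ∈ S x} := by
          ext y
          simp only [Set.mem_setOf_eq]
          rw [hmemU]
          constructor
          · rintro (hc | ⟨x', hx', hc⟩)
            · exfalso
              have hlen : (π ++ [y]).length = ρ.length := by rw [hc]
              have := hπext.length_le
              simp at hlen
              simp at this
              omega
            · -- both ρ ++ [x] and ρ ++ [x'] are prefixes of π ++ [y], same length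
              have h1 : ρ ++ [x] <+: π ++ [y] := hπext.trans ⟨[y], rfl⟩
              have h2 : ρ ++ [x'] <+: π ++ [y] := hSx_ext x' hx' _ hc
              have heq : ρ ++ [x'] = ρ ++ [x] :=
                (List.prefix_of_prefix_length_le h2 h1 (by simp)).eq_of_length (by simp)
              have : x' = x := by simpa using heq
              rwa [this] at hc
          · intro hc
            exact Or.inr ⟨x, hx, hc⟩
        rw [hset]
        obtain ⟨y, hy⟩ := hex
        have hy' : y ∈ {y' : ℕ | π ++ [y'] ∈ S x} := by rw [← hset]; exact hy
        exact ((hSspec x hx).2.1).2 π hπ hπext ⟨y, hy'⟩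
    · -- leaves are in B
      intro τ hτ hnl'
      rw [hmemU] at hτ
      rcases hτ with rfl | ⟨x, hx, hτ⟩
      · exfalso
        refine hnl' x0 ?_
        rw [hmemU]
        exact Or.inr ⟨x0, hx0, (hSspec x0 hx0).1⟩
      · refine (hSspec x hx).2.2.1 τ hτ fun y hy => hnl' y ?_
        rw [hmemU]
        exact Or.inr ⟨x, hx, hy⟩

/-- Small set closure: if `B` is `g`-small above `σ` then its `g`-closure is
`g`-small above `σ` and `g`-closed. -/
theorem stmt9 (g : ℕ → ℕ) (B : Set (List ℕ)) (σ : List ℕ)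
    (hsmall : SmallAbove g σ B) :
    SmallAbove g σ {τ : List ℕ | BigAbove g τ B} ∧
    ∀ ρ : List ℕ, BigAbove g ρ {τ : List ℕ | BigAbove g τ B} →
      BigAbove g ρ B := by
  have key : ∀ ρ : List ℕ, BigAbove g ρ {τ : List ℕ | BigAbove g τ B} → BigAbove g ρ B := by
    intro ρ hbig
    obtain ⟨T, hρ, hbushy, hleaf⟩ := hbig
    exact aux_main g B T.card T le_rfl ρ hρ hbushy fun τ hτ hnl => hleaf τ hτ hnl
  exact ⟨fun h => hsmall (key σ h), key⟩

end
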